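/- Let P ∈ ℝ^{m×m} be symmetric, stochastic, irreducible and positive semi-definite, and Q = I_m − P. Then for all u₁,…,u_m ∈ ℝⁿ and any v₁,…,v_m ∈ ℝⁿ with v_i = argmin over w ∈ ℝⁿ of Σ_j P_{ij}‖w − u_j‖₂² (i.e., v_i = Σ_k P_{ik} u_k), one has σ‖(Q ⊗ I_n)u‖₂² ≤ Σ_{i,j} P_{ij} ‖v_i − u_j‖_p², where σ = min{1, n^{2/p−1}}. -/

import Mathlib

open Finset Matrix

lemma sum_rpow_le_rpow_sum' {ι : Type*} (s : Finset ι) (a : ι → NNReal) {t : ℝ} (ht : 1 ≤ t) :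
    ∑ i ∈ s, (a i) ^ t ≤ (∑ i ∈ s, a i) ^ t := by
  induction s using Finset.cons_induction with
  | empty => simp [NNReal.zero_rpow (by linarith : t ≠ 0)]
  | cons i s hi ih =>
    rw [Finset.sum_cons, Finset.sum_cons]
    exact le_trans (add_le_add le_rfl ih) (NNReal.add_rpow_le_rpow_add _ _ ht)

/-- The `ℓ_p` norm of a vector in `ℝⁿ`. -/
noncomputable def lpNorm {n : ℕ} (p : ENNReal) [Fact (1 ≤ p)]
    (w : Fin n → ℝ) : ℝ :=
  ‖(WithLp.equiv p (Fin n → ℝ)).symm w‖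

lemma sigma_mul_le_lpNorm_sq {n : ℕ} (p : ENNReal) [Fact (1 ≤ p)] (w : Fin n → ℝ) :
    min 1 ((n : ℝ) ^ (2 / p.toReal - 1)) * ∑ l, (w l) ^ 2 ≤ lpNorm p w ^ 2 := by
  rcases Nat.eq_zero_or_pos n with hn | hn
  · subst hn; simp [sq_nonneg]
  have hn1 : (1 : ℝ) ≤ (n : ℝ) := by exact_mod_cast hn
  have hn0 : (0 : ℝ) < (n : ℝ) := by positivity
  have hT0 : (0 : ℝ) ≤ ∑ l, (w l) ^ 2 := Finset.sum_nonneg fun l _ => sq_nonneg _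
  rcases eq_or_ne p ⊤ with hp | hp
  · -- p = ∞
    subst hp
    have hσ : min 1 ((n : ℝ) ^ (2 / (⊤ : ENNReal).toReal - 1)) = (n : ℝ)⁻¹ := by
      rw [ENNReal.toReal_top]
      norm_num
      rw [Real.rpow_neg_one]
      exact min_eq_right (by rw [inv_le_one_iff₀]; right; exact hn1)
    rw [hσ]
    have hbound : ∀ l, (w l) ^ 2 ≤ lpNorm ⊤ w ^ 2 := by
      intro l
      have h1 : |w l| ≤ lpNorm ⊤ w := by
        have : ‖((WithLp.equiv ⊤ (Fin n → ℝ)).symm w) l‖ ≤ ‖(WithLp.equiv ⊤ (Fin n → ℝ)).symm w‖ := by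
          rw [PiLp.norm_eq_ciSup]
          exact le_ciSup (f := fun i => ‖((WithLp.equiv ⊤ (Fin n → ℝ)).symm w) i‖)
            (Set.Finite.bddAbove (Set.finite_range _)) l
        simpa [lpNorm, Real.norm_eq_abs] using this
      calc (w l) ^ 2 = |w l| ^ 2 := (sq_abs _).symm
        _ ≤ lpNorm ⊤ w ^ 2 := by
            apply pow_le_pow_left₀ (abs_nonneg _) h1
    calc (n:ℝ)⁻¹ * ∑ l, (w l) ^ 2 ≤ (n:ℝ)⁻¹ * ∑ l : Fin n, lpNorm ⊤ w ^ 2 := by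
          apply mul_le_mul_of_nonneg_left (Finset.sum_le_sum fun l _ => hbound l) (by positivity)
      _ = lpNorm ⊤ w ^ 2 := by
          rw [Finset.sum_const, Finset.card_univ, Fintype.card_fin, nsmul_eq_mul]
          field_simp
  · -- p finite
    set r := p.toReal with hrdef
    have hr1 : 1 ≤ r := by
      have h1 : (1 : ENNReal) ≤ p := Fact.out
      have := ENNReal.toReal_mono hp h1
      simpa using this
    have hr0 : 0 < r := by linarith
    have hNeq : lpNorm p w = (∑ l, |w l| ^ r) ^ (1 / r) := by
      rw [lpNorm, PiLp.norm_eq_sum hr0]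
      simp [Real.norm_eq_abs]
      rfl
    set S := ∑ l, |w l| ^ r with hSdef
    have hS0 : 0 ≤ S := Finset.sum_nonneg fun l _ => Real.rpow_nonneg (abs_nonneg _) _
    have hNsq : lpNorm p w ^ 2 = S ^ (2 / r) := by
      rw [hNeq, ← Real.rpow_natCast (S ^ (1/r)) 2, ← Real.rpow_mul hS0]
      norm_num
      congr 1
      ring
    rw [hNsq]
    rcases le_total r 2 with hr2 | hr2
    · -- r ≤ 2 : σ ≤ 1, use superadditivity
      have ht : 1 ≤ 2 / r := (one_le_div hr0).mpr hr2
      have hmain := sum_rpow_le_rpow_sum' Finset.univ (fun l => ‖w l‖₊ ^ r) ht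
      have hcast : ((∑ l, ‖w l‖₊ ^ r : NNReal) : ℝ) = S := by
        push_cast [NNReal.coe_rpow, coe_nnnorm, Real.norm_eq_abs]
        rfl
      have hcast2 : ∀ l : Fin n, (((‖w l‖₊ ^ r) ^ (2/r) : NNReal) : ℝ) = (w l)^2 := by
        intro l
        rw [← NNReal.rpow_mul]
        push_cast [NNReal.coe_rpow, coe_nnnorm, Real.norm_eq_abs]
        rw [show r * (2/r) = 2 by field_simp]
        rw [show (2:ℝ) = ((2:ℕ):ℝ) by norm_num, Real.rpow_natCast, sq_abs]
      have hkey : ∑ l, (w l) ^ 2 ≤ S ^ (2 / r) := by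
        calc ∑ l, (w l) ^ 2 = ∑ l, (((‖w l‖₊ ^ r) ^ (2/r) : NNReal) : ℝ) :=
              (Finset.sum_congr rfl fun l _ => (hcast2 l).symm)
          _ = ((∑ l, (‖w l‖₊ ^ r) ^ (2/r) : NNReal) : ℝ) := by push_cast; rfl
          _ ≤ (((∑ l, ‖w l‖₊ ^ r : NNReal)) ^ (2/r) : NNReal) := by exact_mod_cast hmain
          _ = S ^ (2/r) := by rw [NNReal.coe_rpow, hcast]
      calc min 1 ((n : ℝ) ^ (2 / r - 1)) * ∑ l, (w l) ^ 2 ≤ 1 * ∑ l, (w l) ^ 2 := by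
            apply mul_le_mul_of_nonneg_right (min_le_left _ _) hT0
        _ = ∑ l, (w l) ^ 2 := one_mul _
        _ ≤ S ^ (2/r) := hkey
    · -- 2 ≤ r : σ = n^(2/r-1), use Jensen
      set c := (n : ℝ) ^ (2 / r - 1) with hcdef
      have hc0 : 0 ≤ c := Real.rpow_nonneg (le_of_lt hn0) _
      have hc1 : c ≤ 1 :=
        Real.rpow_le_one_of_one_le_of_nonpos hn1 (by
          have : 2 / r ≤ 1 := (div_le_one hr0).mpr hr2
          linarith)
      have hσ : min 1 c = c := min_eq_right hc1
      rw [hσ]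
      set q := r / 2 with hqdef
      have hq1 : 1 ≤ q := by rw [hqdef, le_div_iff₀ (by norm_num : (0:ℝ) < 2)]; linarith
      have hq0 : 0 < q := by linarith
      set T := ∑ l, (w l) ^ 2 with hTdef
      -- Jensen with weights 1/n
      have hjen := Real.rpow_arith_mean_le_arith_mean_rpow Finset.univ
        (fun _ : Fin n => (n : ℝ)⁻¹) (fun l => (w l) ^ 2)
        (fun i _ => by positivity)
        (by simp [Finset.card_univ]; field_simp)
        (fun i _ => sq_nonneg _) hq1
      have hz : ∀ l : Fin n, ((w l) ^ 2 : ℝ) ^ q = |w l| ^ r := by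
        intro l
        rw [← sq_abs, ← Real.rpow_natCast |w l| 2, ← Real.rpow_mul (abs_nonneg _)]
        congr 1
        rw [hqdef]
        push_cast
        field_simp
      have hjen2 : ((n : ℝ)⁻¹ * T) ^ q ≤ (n : ℝ)⁻¹ * S := by
        calc ((n : ℝ)⁻¹ * T) ^ q = (∑ l, (n:ℝ)⁻¹ * (w l)^2) ^ q := by
              rw [← Finset.mul_sum]
          _ ≤ ∑ l, (n:ℝ)⁻¹ * ((w l)^2) ^ q := hjen
          _ = (n : ℝ)⁻¹ * S := by
              rw [← Finset.mul_sum]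
              congr 1
              exact Finset.sum_congr rfl fun l _ => by rw [hz l]
      -- rearrange: c * T ≤ S ^ (2/r)
      have hnq : (0:ℝ) < (n:ℝ) ^ q := Real.rpow_pos_of_pos hn0 q
      have hTqle : T ^ q ≤ (n:ℝ) ^ (q - 1) * S := by
        have h2 : ((n:ℝ)⁻¹) ^ q * T ^ q ≤ (n:ℝ)⁻¹ * S := by
          rw [← Real.mul_rpow (by positivity) hT0]; exact hjen2
        rw [Real.inv_rpow (le_of_lt hn0) q] at h2
        have h5 := mul_le_mul_of_nonneg_left h2 (le_of_lt hnq)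
        rw [← mul_assoc, mul_inv_cancel₀ (ne_of_gt hnq), one_mul] at h5
        calc T ^ q ≤ (n:ℝ)^q * ((n:ℝ)⁻¹ * S) := h5
          _ = (n:ℝ)^(q-1) * S := by
              rw [Real.rpow_sub hn0, Real.rpow_one]; ring
      have hcq : c ^ q = (n:ℝ) ^ ((2/r - 1) * q) := by
        rw [hcdef, ← Real.rpow_mul (le_of_lt hn0)]
      have hexp : (2/r - 1) * q = 1 - q := by rw [hqdef]; field_simp
      have hcTq : (c * T) ^ q ≤ S := by
        rw [Real.mul_rpow hc0 hT0, hcq, hexp]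
        calc (n:ℝ)^(1-q) * T^q ≤ (n:ℝ)^(1-q) * ((n:ℝ)^(q-1) * S) :=
              mul_le_mul_of_nonneg_left hTqle (Real.rpow_nonneg (le_of_lt hn0) _)
          _ = S := by
              rw [← mul_assoc, ← Real.rpow_add hn0]
              norm_num
      have h4 := Real.rpow_le_rpow (Real.rpow_nonneg (by positivity : (0:ℝ) ≤ c * T) q)
        hcTq (by positivity : (0:ℝ) ≤ 1/q)
      rwa [← Real.rpow_mul (by positivity : (0:ℝ) ≤ c*T), mul_one_div, div_self (ne_of_gt hq0),
        Real.rpow_one, show (1:ℝ)/q = 2/r by rw [hqdef, one_div_div]] at h4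

lemma quad_le_sum_sq {m : ℕ} (P : Matrix (Fin m) (Fin m) ℝ)
    (hnn : ∀ i j, 0 ≤ P i j) (hrow : ∀ i, ∑ j, P i j = 1)
    (hcol : ∀ j, ∑ i, P i j = 1) (z : Fin m → ℝ) :
    ∑ i, ∑ j, P i j * (z i * z j) ≤ ∑ i, z i ^ 2 := by
  have hterm : ∀ i j, P i j * (z i * z j) ≤ P i j * ((z i ^ 2 + z j ^ 2) / 2) := by
    intro i j
    apply mul_le_mul_of_nonneg_left _ (hnn i j)
    nlinarith [sq_nonneg (z i - z j)]
  have h1 : ∑ i, ∑ j, P i j * z i ^ 2 = ∑ i, z i ^ 2 := by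
    refine Finset.sum_congr rfl fun i _ => ?_
    rw [← Finset.sum_mul, hrow i, one_mul]
  have h2 : ∑ i, ∑ j, P i j * z j ^ 2 = ∑ i, z i ^ 2 := by
    rw [Finset.sum_comm]
    refine Finset.sum_congr rfl fun j _ => ?_
    rw [← Finset.sum_mul, hcol j, one_mul]
  calc ∑ i, ∑ j, P i j * (z i * z j)
      ≤ ∑ i, ∑ j, P i j * ((z i ^ 2 + z j ^ 2) / 2) :=
        Finset.sum_le_sum fun i _ => Finset.sum_le_sum fun j _ => hterm i j
    _ = (∑ i, ∑ j, P i j * z i ^ 2) / 2 + (∑ i, ∑ j, P i j * z j ^ 2) / 2 := by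
        rw [Finset.sum_div, Finset.sum_div, ← Finset.sum_add_distrib]
        refine Finset.sum_congr rfl fun i _ => ?_
        rw [Finset.sum_div, Finset.sum_div, ← Finset.sum_add_distrib]
        refine Finset.sum_congr rfl fun j _ => by ring
    _ = ∑ i, z i ^ 2 := by rw [h1, h2]; ring

open scoped MatrixOrder in
lemma mulVec_sq_le_inner {m : ℕ} (P : Matrix (Fin m) (Fin m) ℝ)
    (hsym : P.IsSymm) (hnn : ∀ i j, 0 ≤ P i j) (hrow : ∀ i, ∑ j, P i j = 1)
    (hpsd : P.PosSemidef) (x : Fin m → ℝ) :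
    ∑ i, (∑ j, P i j * x j) ^ 2 ≤ ∑ i, x i * (∑ j, P i j * x j) := by
  have hcol : ∀ j, ∑ i, P i j = 1 := by
    intro j
    have h : ∀ i, P i j = P j i := fun i => by
      conv_lhs => rw [← hsym]
      rfl
    simp_rw [h]
    exact hrow j
  set S := CFC.sqrt P with hSdef
  have hSsym : S.transpose = S := by
    have h := (CFC.sqrt_nonneg P).posSemidef.isHermitian
    simpa [Matrix.IsHermitian, Matrix.conjTranspose_eq_transpose_of_trivial] using h
  have hSS : S * S = P := CFC.sqrt_mul_sqrt_self P hpsd.nonneg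
  set z := S.mulVec x with hzdef
  have hA : ∑ i, x i * (∑ j, P i j * x j) = ∑ i, z i ^ 2 := by
    have h1 : x ⬝ᵥ P.mulVec x = z ⬝ᵥ z := by
      rw [← hSS, ← Matrix.mulVec_mulVec, Matrix.dotProduct_mulVec, ← Matrix.mulVec_transpose,
        hSsym]
    simpa [dotProduct, Matrix.mulVec, sq] using h1
  have hB : ∑ i, (∑ j, P i j * x j) ^ 2 = ∑ i, ∑ j, P i j * (z i * z j) := by
    have h1 : P.mulVec x ⬝ᵥ P.mulVec x = P.mulVec z ⬝ᵥ z := by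
      conv_lhs => rw [← hSS, ← Matrix.mulVec_mulVec]
      rw [Matrix.dotProduct_mulVec, ← Matrix.mulVec_transpose, hSsym, Matrix.mulVec_mulVec, hSS]
    have h2 : P.mulVec z ⬝ᵥ z = ∑ i, ∑ j, P i j * (z i * z j) := by
      simp only [dotProduct, Matrix.mulVec, Finset.sum_mul]
      exact Finset.sum_congr rfl fun i _ => Finset.sum_congr rfl fun j _ => by ring
    rw [← h2, ← h1]
    simp [dotProduct, Matrix.mulVec, sq]
  rw [hA, hB]
  exact quad_le_sum_sq P hnn hrow hcol z

lemma key_vec {m : ℕ} (P : Matrix (Fin m) (Fin m) ℝ)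
    (hsym : P.IsSymm) (hnn : ∀ i j, 0 ≤ P i j) (hrow : ∀ i, ∑ j, P i j = 1)
    (hpsd : P.PosSemidef) (x : Fin m → ℝ) :
    ∑ i, (x i - ∑ j, P i j * x j) ^ 2 ≤
      ∑ i, ∑ j, P i j * ((∑ k, P i k * x k) - x j) ^ 2 := by
  have hcol : ∀ j, ∑ i, P i j = 1 := by
    intro j
    have h : ∀ i, P i j = P j i := fun i => by
      conv_lhs => rw [← hsym]
      rfl
    simp_rw [h]
    exact hrow j
  set y : Fin m → ℝ := fun i => ∑ j, P i j * x j with hydef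
  have hL : ∑ i, (x i - ∑ j, P i j * x j) ^ 2
      = ∑ i, x i ^ 2 - 2 * ∑ i, x i * y i + ∑ i, y i ^ 2 := by
    have h : ∀ i, (x i - ∑ j, P i j * x j) ^ 2
        = x i ^ 2 - 2 * (x i * y i) + y i ^ 2 := fun i => by
      show (x i - y i) ^ 2 = _
      ring
    simp_rw [h, Finset.sum_add_distrib, Finset.sum_sub_distrib, ← Finset.mul_sum]
  have hR : ∑ i, ∑ j, P i j * ((∑ k, P i k * x k) - x j) ^ 2
      = ∑ i, x i ^ 2 - ∑ i, y i ^ 2 := by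
    have hinner : ∀ i, ∑ j, P i j * ((∑ k, P i k * x k) - x j) ^ 2
        = (∑ j, P i j * x j ^ 2) - y i ^ 2 := by
      intro i
      have expand : ∀ j, P i j * ((∑ k, P i k * x k) - x j) ^ 2
          = P i j * y i ^ 2 - 2 * (P i j * x j) * y i + P i j * x j ^ 2 := by
        intro j
        show P i j * (y i - x j) ^ 2 = _
        ring
      have hsum2 : ∑ j, 2 * (P i j * x j) * y i = 2 * y i ^ 2 := by
        have e1 : ∑ j, 2 * (P i j * x j) * y i = (∑ j, P i j * x j) * (2 * y i) := by
          rw [Finset.sum_mul]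
          exact Finset.sum_congr rfl fun j _ => by ring
        rw [e1]
        show y i * (2 * y i) = _
        ring
      simp_rw [expand]
      rw [Finset.sum_add_distrib, Finset.sum_sub_distrib, ← Finset.sum_mul, hrow i, one_mul,
        hsum2]
      ring
    rw [Finset.sum_congr rfl fun i _ => hinner i, Finset.sum_sub_distrib]
    have h2 : ∑ i, ∑ j, P i j * x j ^ 2 = ∑ i, x i ^ 2 := by
      rw [Finset.sum_comm]
      refine Finset.sum_congr rfl fun j _ => ?_
      rw [← Finset.sum_mul, hcol j, one_mul]
    rw [h2]
  rw [hL, hR]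
  have hBA : ∑ i, y i ^ 2 ≤ ∑ i, x i * y i :=
    mulVec_sq_le_inner P hsym hnn hrow hpsd x
  linarith

/-- For a symmetric, stochastic, irreducible, PSD matrix `P` and `Q = I − P`,
with `vᵢ = ∑ₖ Pᵢₖ uₖ` (the minimizer of `w ↦ ∑ⱼ Pᵢⱼ‖w − uⱼ‖₂²`),
`σ‖(Q ⊗ Iₙ)u‖₂² ≤ ∑ᵢⱼ Pᵢⱼ ‖vᵢ − uⱼ‖ₚ²` where `σ = min{1, n^{2/p−1}}`. -/
theorem kron_residual_le_weighted_lp_variance {m n : ℕ}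
    (p : ENNReal) [Fact (1 ≤ p)]
    (P : Matrix (Fin m) (Fin m) ℝ)
    (hsym : P.IsSymm) (hnn : ∀ i j, 0 ≤ P i j)
    (hrow : ∀ i, ∑ j, P i j = 1) (hpsd : P.PosSemidef)
    (hirr : ∀ i j, ∃ k : ℕ, 0 < (P ^ k) i j)
    (u v : Fin m → (Fin n → ℝ))
    (hv : ∀ i, v i = ∑ k, P i k • u k) :
    min 1 ((n : ℝ) ^ (2 / p.toReal - 1)) *
        ∑ i, ∑ l, (u i l - (∑ j, P i j • u j) l) ^ 2 ≤
      ∑ i, ∑ j, P i j * lpNorm p (v i - u j) ^ 2 := by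
  set σ := min 1 ((n : ℝ) ^ (2 / p.toReal - 1)) with hσdef
  have hσ0 : 0 ≤ σ := le_min zero_le_one (Real.rpow_nonneg (Nat.cast_nonneg n) _)
  have hv' : ∀ i l, v i l = ∑ k, P i k * u k l := by
    intro i l
    rw [hv i]
    simp [Finset.sum_apply]
  have happly : ∀ (i : Fin m) (l : Fin n), (∑ j, P i j • u j) l = ∑ j, P i j * u j l := by
    intro i l
    simp [Finset.sum_apply]
  have hLrw : ∑ i, ∑ l, (u i l - (∑ j, P i j • u j) l) ^ 2
      = ∑ l, ∑ i, (u i l - ∑ j, P i j * u j l) ^ 2 := by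
    simp_rw [happly]
    exact Finset.sum_comm
  have hkey : ∑ l, ∑ i, (u i l - ∑ j, P i j * u j l) ^ 2
      ≤ ∑ i, ∑ j, P i j * ∑ l, (v i l - u j l) ^ 2 := by
    have step : ∀ l : Fin n, ∑ i, (u i l - ∑ j, P i j * u j l) ^ 2
        ≤ ∑ i, ∑ j, P i j * ((∑ k, P i k * u k l) - u j l) ^ 2 :=
      fun l => key_vec P hsym hnn hrow hpsd (fun i => u i l)
    calc ∑ l, ∑ i, (u i l - ∑ j, P i j * u j l) ^ 2
        ≤ ∑ l, ∑ i, ∑ j, P i j * ((∑ k, P i k * u k l) - u j l) ^ 2 :=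
          Finset.sum_le_sum fun l _ => step l
      _ = ∑ i, ∑ j, P i j * ∑ l, (v i l - u j l) ^ 2 := by
          rw [Finset.sum_comm]
          refine Finset.sum_congr rfl fun i _ => ?_
          rw [Finset.sum_comm]
          refine Finset.sum_congr rfl fun j _ => ?_
          rw [Finset.mul_sum]
          refine Finset.sum_congr rfl fun l _ => ?_
          rw [hv' i l]
  have hstep3 : ∀ (i : Fin m) (j : Fin m),
      σ * ∑ l, (v i l - u j l) ^ 2 ≤ lpNorm p (v i - u j) ^ 2 := by
    intro i j
    have := sigma_mul_le_lpNorm_sq p (v i - u j)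
    simpa [Pi.sub_apply] using this
  calc σ * ∑ i, ∑ l, (u i l - (∑ j, P i j • u j) l) ^ 2
      = σ * ∑ l, ∑ i, (u i l - ∑ j, P i j * u j l) ^ 2 := by rw [hLrw]
    _ ≤ σ * ∑ i, ∑ j, P i j * ∑ l, (v i l - u j l) ^ 2 :=
        mul_le_mul_of_nonneg_left hkey hσ0
    _ = ∑ i, ∑ j, P i j * (σ * ∑ l, (v i l - u j l) ^ 2) := by
        rw [Finset.mul_sum]
        refine Finset.sum_congr rfl fun i _ => ?_
        rw [Finset.mul_sum]
        refine Finset.sum_congr rfl fun j _ => by ring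
    _ ≤ ∑ i, ∑ j, P i j * lpNorm p (v i - u j) ^ 2 :=
        Finset.sum_le_sum fun i _ => Finset.sum_le_sum fun j _ =>
          mul_le_mul_of_nonneg_left (hstep3 i j) (hnn i j)
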